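/- arXiv:1510.02397 — 5 statements merged into one kernel-verified Lean document; each statement's English description precedes it below -/
import Mathlib

section
/- Let f and g be partial-bijections of Ω, with f a bijection from A_f onto B_f and g a bijection from A_g onto B_g. Then the complement of the codomain of the composite g ∘ f satisfies |(g(B_f ∩ A_g))ᶜ| = |B_gᶜ| + |B_fᶜ \ A_gᶜ|. -/
/-- The complement of the codomain of a composite of partial-bijections:
`|(g(Bf ∩ Ag))ᶜ| = |Bgᶜ| + |Bfᶜ \ Agᶜ|`. -/
theorem stmt_5 {Ω : Type*} [Infinite Ω] (f g : Ω → Ω) (Af Bf Ag Bg : Set Ω)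
    (hAf : Afᶜ.Finite) (hBf : Bfᶜ.Finite) (hf : Set.BijOn f Af Bf)
    (hAg : Agᶜ.Finite) (hBg : Bgᶜ.Finite) (hg : Set.BijOn g Ag Bg) :
    (g '' (Bf ∩ Ag))ᶜ.ncard = Bgᶜ.ncard + (Bfᶜ \ Agᶜ).ncard := by
  have hsub : g '' (Bf ∩ Ag) ⊆ Bg := by
    rintro x ⟨a, ⟨_, haAg⟩, rfl⟩
    exact hg.mapsTo haAg
  have hkey : (g '' (Bf ∩ Ag))ᶜ = Bgᶜ ∪ g '' (Ag ∩ Bfᶜ) := by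
    ext x
    constructor
    · intro hx
      by_cases hxBg : x ∈ Bg
      · right
        obtain ⟨a, haAg, rfl⟩ := hg.surjOn hxBg
        refine ⟨a, ⟨haAg, ?_⟩, rfl⟩
        intro haBf
        exact hx ⟨a, ⟨haBf, haAg⟩, rfl⟩
      · exact Or.inl hxBg
    · rintro (hx | ⟨a, ⟨haAg, haBf⟩, rfl⟩)
      · exact fun h => hx (hsub h)
      · rintro ⟨b, ⟨hbBf, hbAg⟩, hab⟩
        exact haBf (hg.injOn hbAg haAg hab ▸ hbBf)
  have hfin2 : (g '' (Ag ∩ Bfᶜ)).Finite :=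
    (hBf.subset Set.inter_subset_right).image g
  have hdisj : Disjoint Bgᶜ (g '' (Ag ∩ Bfᶜ)) := by
    rw [Set.disjoint_left]
    rintro x hx ⟨a, ⟨haAg, _⟩, rfl⟩
    exact hx (hg.mapsTo haAg)
  have himg : (g '' (Ag ∩ Bfᶜ)).ncard = (Ag ∩ Bfᶜ).ncard :=
    Set.ncard_image_of_injOn (hg.injOn.mono Set.inter_subset_left)
  rw [hkey, Set.ncard_union_eq hdisj hBg hfin2, himg, Set.diff_compl,
    Set.inter_comm]
end

section
/- Let f and g be partial-bijections of Ω, with f a bijection from A_f onto B_f and g a bijection from A_g onto B_g. Then the composite partial-bijection g ∘ f (a bijection from A_f ∩ f⁻¹(A_g) onto g(B_f ∩ A_g)) satisfies ind(g ∘ f) = ind(g) + ind(f). -/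
/-- The index is additive under composition of partial-bijections. -/
theorem stmt_6 {Ω : Type*} [Infinite Ω] (f g : Ω → Ω) (Af Bf Ag Bg : Set Ω)
    (hAf : Afᶜ.Finite) (hBf : Bfᶜ.Finite) (hf : Set.BijOn f Af Bf)
    (hAg : Agᶜ.Finite) (hBg : Bgᶜ.Finite) (hg : Set.BijOn g Ag Bg) :
    ((Af ∩ f ⁻¹' Ag)ᶜ.ncard : ℤ) - ((g '' (Bf ∩ Ag))ᶜ.ncard : ℤ) =
      ((Agᶜ.ncard : ℤ) - (Bgᶜ.ncard : ℤ)) + ((Afᶜ.ncard : ℤ) - (Bfᶜ.ncard : ℤ)) := by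
  -- f bijects Af ∩ f⁻¹(Agᶜ) onto Bf ∩ Agᶜ
  have himg1 : f '' (Af ∩ f ⁻¹' Agᶜ) = Bf ∩ Agᶜ := by
    apply Set.Subset.antisymm
    · rintro y ⟨x, ⟨hx1, hx2⟩, rfl⟩; exact ⟨hf.mapsTo hx1, hx2⟩
    · rintro y ⟨hy1, hy2⟩
      obtain ⟨x, hx, rfl⟩ := hf.surjOn hy1
      exact ⟨x, ⟨hx, hy2⟩, rfl⟩
  have hfin1 : (Af ∩ f ⁻¹' Agᶜ).Finite := by
    apply Set.Finite.of_finite_image _ (hf.injOn.mono Set.inter_subset_left)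
    rw [himg1]; exact hAg.subset Set.inter_subset_right
  have hcard1 : (Af ∩ f ⁻¹' Agᶜ).ncard = (Bf ∩ Agᶜ).ncard := by
    rw [← himg1, Set.ncard_image_of_injOn (hf.injOn.mono Set.inter_subset_left)]
  -- domain complement decomposition
  have hD : (Af ∩ f ⁻¹' Ag)ᶜ = Afᶜ ∪ (Af ∩ f ⁻¹' Agᶜ) := by
    ext x
    by_cases hx : x ∈ Af <;> simp [hx, Set.mem_compl_iff]
  have hDcard : ((Af ∩ f ⁻¹' Ag)ᶜ).ncard = Afᶜ.ncard + (Af ∩ f ⁻¹' Agᶜ).ncard := by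
    rw [hD, Set.ncard_union_eq (disjoint_compl_left.mono_right Set.inter_subset_left)
      hAf hfin1]
  -- codomain complement decomposition
  have hfin2 : (g '' (Bfᶜ ∩ Ag)).Finite := (hBf.subset Set.inter_subset_left).image g
  have hC : (g '' (Bf ∩ Ag))ᶜ = Bgᶜ ∪ g '' (Bfᶜ ∩ Ag) := by
    ext y
    simp only [Set.mem_compl_iff, Set.mem_union, Set.mem_image]
    constructor
    · intro hy
      by_cases hyB : y ∈ Bg
      · obtain ⟨x, hx, rfl⟩ := hg.surjOn hyB
        right
        refine ⟨x, ⟨?_, hx⟩, rfl⟩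
        intro hxBf
        exact hy ⟨x, ⟨hxBf, hx⟩, rfl⟩
      · exact Or.inl hyB
    · rintro (hy | ⟨x, ⟨hxBf, hxAg⟩, rfl⟩)
      · rintro ⟨x, ⟨_, hxAg⟩, rfl⟩
        exact hy (hg.mapsTo hxAg)
      · rintro ⟨x', ⟨hx'Bf, hx'Ag⟩, hxx'⟩
        exact hxBf (hg.injOn hx'Ag hxAg hxx' ▸ hx'Bf)
  have hCdisj : Disjoint Bgᶜ (g '' (Bfᶜ ∩ Ag)) := by
    apply disjoint_compl_left.mono_right
    rintro y ⟨x, ⟨_, hxAg⟩, rfl⟩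
    exact hg.mapsTo hxAg
  have hCcard : ((g '' (Bf ∩ Ag))ᶜ).ncard = Bgᶜ.ncard + (Bfᶜ ∩ Ag).ncard := by
    rw [hC, Set.ncard_union_eq hCdisj hBg hfin2,
      Set.ncard_image_of_injOn (hg.injOn.mono Set.inter_subset_right)]
  -- split Agᶜ along Bf
  have hAgc : Agᶜ.ncard = (Bf ∩ Agᶜ).ncard + (Bfᶜ ∩ Agᶜ).ncard := by
    have : Agᶜ = (Bf ∩ Agᶜ) ∪ (Bfᶜ ∩ Agᶜ) := by
      ext x; by_cases hx : x ∈ Bf <;> simp [hx]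
    conv_lhs => rw [this]
    rw [ Set.ncard_union_eq
      (Disjoint.mono Set.inter_subset_left Set.inter_subset_left disjoint_compl_right)
      (hAg.subset Set.inter_subset_right) (hAg.subset Set.inter_subset_right)]
  -- split Bfᶜ along Ag
  have hBfc : Bfᶜ.ncard = (Bfᶜ ∩ Ag).ncard + (Bfᶜ ∩ Agᶜ).ncard := by
    have : Bfᶜ = (Bfᶜ ∩ Ag) ∪ (Bfᶜ ∩ Agᶜ) := by
      ext x; by_cases hx : x ∈ Ag <;> simp [hx]
    conv_lhs => rw [this]
    rw [ Set.ncard_union_eq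
      (Disjoint.mono Set.inter_subset_right Set.inter_subset_right disjoint_compl_right)
      (hBf.subset Set.inter_subset_left) (hBf.subset Set.inter_subset_left)]
  rw [hDcard, hCcard, hcard1]
  omega
end

section
/- Let f and g be partial-bijections of Ω with domains A_f, A_g. If ind(f) = ind(g), then there exists a permutation λ of Ω such that λ ∘ f and g agree on some cofinite subset of A_f ∩ A_g (i.e., λ ∘ f ≡ g). -/
/-- A bijection between cofinite sets whose complements have equal finite cardinality
extends to a permutation. -/
lemma extend_perm_aux {Ω : Type*} (h : Ω → Ω) (S T : Set Ω) (hS : Sᶜ.Finite) (hT : Tᶜ.Finite)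
    (hb : Set.BijOn h S T) (hcard : Sᶜ.ncard = Tᶜ.ncard) :
    ∃ l : Ω ≃ Ω, ∀ x ∈ S, l x = h x := by
  classical
  have hSf := hS.to_subtype
  have hTf := hT.to_subtype
  have hne : Nonempty ((Sᶜ : Set Ω) ≃ (Tᶜ : Set Ω)) := by
    rw [← Finite.card_eq]
    simpa [Nat.card_coe_set_eq] using hcard
  obtain ⟨e⟩ := hne
  refine ⟨(Equiv.Set.sumCompl S).symm.trans (((hb.equiv h).sumCongr e).trans
    (Equiv.Set.sumCompl T)), fun x hx => ?_⟩
  simp [Equiv.Set.sumCompl_symm_apply_of_mem hx]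
  rfl

/-- Partial-bijections of equal index are related by a left permutation, up to
almost equality. -/
theorem stmt_10 {Ω : Type*} [Infinite Ω] (f g : Ω → Ω) (Af Bf Ag Bg : Set Ω)
    (hAf : Afᶜ.Finite) (hBf : Bfᶜ.Finite) (hf : Set.BijOn f Af Bf)
    (hAg : Agᶜ.Finite) (hBg : Bgᶜ.Finite) (hg : Set.BijOn g Ag Bg)
    (hind : (Afᶜ.ncard : ℤ) - (Bfᶜ.ncard : ℤ) = (Agᶜ.ncard : ℤ) - (Bgᶜ.ncard : ℤ)) :
    ∃ l : Ω ≃ Ω, ∃ E ⊆ Af ∩ Ag, Eᶜ.Finite ∧ ∀ x ∈ E, l (f x) = g x := by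
  classical
  set E := Af ∩ Ag with hE
  have hfinj : Set.InjOn f Af := hf.injOn
  have hginj : Set.InjOn g Ag := hg.injOn
  have hEAf : E ⊆ Af := Set.inter_subset_left
  have hEAg : E ⊆ Ag := Set.inter_subset_right
  have hfE : Set.BijOn f E (f '' E) := (hfinj.mono hEAf).bijOn_image
  have hgE : Set.BijOn g E (g '' E) := (hginj.mono hEAg).bijOn_image
  set finv := Function.invFunOn f E with hfinvdef
  have hfinv : Set.BijOn finv (f '' E) E := hfE.symm hfE.invOn_invFunOn.symm
  have hcomp : Set.BijOn (g ∘ finv) (f '' E) (g '' E) := hgE.comp hfinv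
  -- complement of f '' E
  have hsplitF : Bf = f '' E ∪ f '' (Af \ Ag) := by
    rw [← hf.image_eq, ← Set.image_union, hE, Set.inter_union_diff]
  have hdisjF : Disjoint (f '' E) (f '' (Af \ Ag)) := by
    rw [Set.disjoint_iff_inter_eq_empty, ← hfinj.image_inter hEAf Set.diff_subset]
    have : E ∩ (Af \ Ag) = ∅ := by
      rw [hE]; ext x; simp; tauto
    rw [this, Set.image_empty]
  have hcompF : (f '' E)ᶜ = Bfᶜ ∪ f '' (Af \ Ag) := by
    ext x
    by_cases hx : x ∈ Bf
    · rw [hsplitF] at hx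
      simp only [Set.mem_compl_iff, Set.mem_union]
      constructor
      · intro hnx
        rcases Set.mem_union _ _ _ |>.mp hx with h1 | h1
        · exact absurd h1 hnx
        · exact Or.inr h1
      · rintro (h1 | h1)
        · exact fun hmem => h1 (hsplitF ▸ Set.mem_union_left _ hmem)
        · exact fun hmem => (Set.disjoint_left.mp hdisjF hmem) h1
    · simp only [Set.mem_compl_iff, Set.mem_union]
      constructor
      · intro _; exact Or.inl hx
      · intro _ hmem
        exact hx (hsplitF ▸ Set.mem_union_left _ hmem)
  have hsplitG : Bg = g '' E ∪ g '' (Ag \ Af) := by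
    rw [← hg.image_eq, ← Set.image_union, hE, Set.inter_comm, Set.inter_union_diff]
  have hdisjG : Disjoint (g '' E) (g '' (Ag \ Af)) := by
    rw [Set.disjoint_iff_inter_eq_empty, ← hginj.image_inter hEAg Set.diff_subset]
    have : E ∩ (Ag \ Af) = ∅ := by
      rw [hE]; ext x; simp; tauto
    rw [this, Set.image_empty]
  have hcompG : (g '' E)ᶜ = Bgᶜ ∪ g '' (Ag \ Af) := by
    ext x
    by_cases hx : x ∈ Bg
    · rw [hsplitG] at hx
      simp only [Set.mem_compl_iff, Set.mem_union]
      constructor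
      · intro hnx
        rcases Set.mem_union _ _ _ |>.mp hx with h1 | h1
        · exact absurd h1 hnx
        · exact Or.inr h1
      · rintro (h1 | h1)
        · exact fun hmem => h1 (hsplitG ▸ Set.mem_union_left _ hmem)
        · exact fun hmem => (Set.disjoint_left.mp hdisjG hmem) h1
    · simp only [Set.mem_compl_iff, Set.mem_union]
      constructor
      · intro _; exact Or.inl hx
      · intro _ hmem
        exact hx (hsplitG ▸ Set.mem_union_left _ hmem)
  -- finiteness
  have hAfAg : (Af \ Ag).Finite := hAg.subset (by intro x hx; exact hx.2)
  have hAgAf : (Ag \ Af).Finite := hAf.subset (by intro x hx; exact hx.2)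
  have hFfin : (f '' E)ᶜ.Finite := by
    rw [hcompF]; exact hBf.union (hAfAg.image f)
  have hGfin : (g '' E)ᶜ.Finite := by
    rw [hcompG]; exact hBg.union (hAgAf.image g)
  -- cardinalities
  have hdisjF' : Disjoint Bfᶜ (f '' (Af \ Ag)) := by
    rw [Set.disjoint_left]
    intro x hx hmem
    exact hx (hsplitF ▸ Set.mem_union_right _ hmem)
  have hdisjG' : Disjoint Bgᶜ (g '' (Ag \ Af)) := by
    rw [Set.disjoint_left]
    intro x hx hmem
    exact hx (hsplitG ▸ Set.mem_union_right _ hmem)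
  have hcardF : (f '' E)ᶜ.ncard = Bfᶜ.ncard + (Af \ Ag).ncard := by
    rw [hcompF, Set.ncard_union_eq hdisjF' hBf (hAfAg.image f),
      Set.ncard_image_of_injOn (hfinj.mono Set.diff_subset)]
  have hcardG : (g '' E)ᶜ.ncard = Bgᶜ.ncard + (Ag \ Af).ncard := by
    rw [hcompG, Set.ncard_union_eq hdisjG' hBg (hAgAf.image g),
      Set.ncard_image_of_injOn (hginj.mono Set.diff_subset)]
  -- bridging equality
  have hbridge : Afᶜ.ncard + (Af \ Ag).ncard = Agᶜ.ncard + (Ag \ Af).ncard := by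
    have h1 : Afᶜ ∪ (Af \ Ag) = Afᶜ ∪ Agᶜ := by
      ext x; simp [Set.mem_diff]; tauto
    have h2 : Agᶜ ∪ (Ag \ Af) = Afᶜ ∪ Agᶜ := by
      ext x; simp [Set.mem_diff]; tauto
    have d1 : Disjoint Afᶜ (Af \ Ag) := by
      rw [Set.disjoint_left]; intro x hx hmem; exact hx hmem.1
    have d2 : Disjoint Agᶜ (Ag \ Af) := by
      rw [Set.disjoint_left]; intro x hx hmem; exact hx hmem.1
    rw [← Set.ncard_union_eq d1 hAf hAfAg, ← Set.ncard_union_eq d2 hAg hAgAf, h1, h2]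
  have hcardeq : (f '' E)ᶜ.ncard = (g '' E)ᶜ.ncard := by
    rw [hcardF, hcardG]; omega
  obtain ⟨l, hl⟩ := extend_perm_aux (g ∘ finv) (f '' E) (g '' E) hFfin hGfin hcomp hcardeq
  refine ⟨l, E, subset_rfl, ?_, fun x hx => ?_⟩
  · have : Eᶜ = Afᶜ ∪ Agᶜ := by rw [hE, Set.compl_inter]
    rw [this]; exact hAf.union hAg
  · have hfx : f x ∈ f '' E := Set.mem_image_of_mem f hx
    rw [hl (f x) hfx]
    simp only [Function.comp_apply]
    congr 1
    exact (hfinj.mono hEAf).leftInvOn_invFunOn hx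
end

section
/- Let f and g be partial-bijections of Ω with domains A_f, A_g. If ind(f) = ind(g), then there exists a permutation ρ of Ω such that f ∘ ρ and g agree on some cofinite subset of ρ⁻¹(A_f) ∩ A_g (i.e., f ∘ ρ ≡ g). -/
open Set Function

/-- Partial-bijections of equal index are related by a right permutation, up to
almost equality. -/
theorem stmt_11 {Ω : Type*} [Infinite Ω] (f g : Ω → Ω) (Af Bf Ag Bg : Set Ω)
    (hAf : Afᶜ.Finite) (hBf : Bfᶜ.Finite) (hf : Set.BijOn f Af Bf)
    (hAg : Agᶜ.Finite) (hBg : Bgᶜ.Finite) (hg : Set.BijOn g Ag Bg)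
    (hind : (Afᶜ.ncard : ℤ) - (Bfᶜ.ncard : ℤ) = (Agᶜ.ncard : ℤ) - (Bgᶜ.ncard : ℤ)) :
    ∃ ρ : Ω ≃ Ω, ∃ E ⊆ (⇑ρ ⁻¹' Af) ∩ Ag, Eᶜ.Finite ∧ ∀ x ∈ E, f (ρ x) = g x := by
  classical
  have : Nonempty Ω := inferInstance
  set F := Function.invFunOn f Af with hF
  -- F is a bijection from Bf to Af
  have hFinv : Set.InvOn F f Af Bf := hf.invOn_invFunOn
  have hFbij : Set.BijOn F Bf Af :=
    hFinv.symm.bijOn hf.surjOn.mapsTo_invFunOn hf.mapsTo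
  set A : Set Ω := Ag ∩ g ⁻¹' Bf with hA
  set B : Set Ω := F '' (Bg ∩ Bf) with hB
  -- g maps A bijectively onto Bg ∩ Bf
  have hgA : Set.BijOn g A (Bg ∩ Bf) := by
    refine ⟨fun x hx => ⟨hg.mapsTo hx.1, hx.2⟩, hg.injOn.mono inter_subset_left, ?_⟩
    rintro y ⟨hy1, hy2⟩
    obtain ⟨x, hx, rfl⟩ := hg.surjOn hy1
    exact ⟨x, ⟨hx, hy2⟩, rfl⟩
  -- F maps Bg ∩ Bf bijectively onto B
  have hFB : Set.BijOn F (Bg ∩ Bf) B :=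
    (hFbij.injOn.mono inter_subset_right).bijOn_image
  have hAB : Set.BijOn (F ∘ g) A B := hFB.comp hgA
  -- finiteness of complements
  have hBsubAf : B ⊆ Af := fun x ⟨y, hy, hxy⟩ => hxy ▸ hFbij.mapsTo hy.2
  have hfin1 : (Ag ∩ g ⁻¹' Bfᶜ).Finite := by
    apply Set.Finite.of_finite_image (f := g)
    · exact hBf.subset (by rintro _ ⟨x, hx, rfl⟩; exact hx.2)
    · exact hg.injOn.mono inter_subset_left
  have hAc : Aᶜ = Agᶜ ∪ (Ag ∩ g ⁻¹' Bfᶜ) := by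
    ext x
    by_cases hx : x ∈ Ag <;> simp [hA, hx]
  have hAcfin : Aᶜ.Finite := hAc ▸ hAg.union hfin1
  have hfin2 : (F '' (Bf ∩ Bgᶜ)).Finite := (hBg.subset inter_subset_right).image F
  have hBc : Bᶜ = Afᶜ ∪ F '' (Bf ∩ Bgᶜ) := by
    ext x
    constructor
    · intro hx
      by_cases hxf : x ∈ Af
      · obtain ⟨y, hy, rfl⟩ := hFbij.surjOn hxf
        right
        refine ⟨y, ⟨hy, fun hyg => hx ⟨y, ⟨hyg, hy⟩, rfl⟩⟩, rfl⟩
      · exact Or.inl hxf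
    · rintro (hx | ⟨y, ⟨hy1, hy2⟩, rfl⟩)
      · exact fun hxB => hx (hBsubAf hxB)
      · rintro ⟨z, hz, hzy⟩
        have := hFbij.injOn hz.2 hy1 hzy
        exact hy2 (this ▸ hz.1)
  have hBcfin : Bᶜ.Finite := hBc ▸ hAf.union hfin2
  -- ncard computations
  have hd1 : Disjoint Agᶜ (Ag ∩ g ⁻¹' Bfᶜ) :=
    Set.disjoint_left.2 fun x hx hx2 => hx hx2.1
  have hd2 : Disjoint Afᶜ (F '' (Bf ∩ Bgᶜ)) :=
    Set.disjoint_left.2 fun x hx ⟨y, hy, hxy⟩ => hx (hxy ▸ hFbij.mapsTo hy.1)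
  have hcard1 : (Ag ∩ g ⁻¹' Bfᶜ).ncard = (Bg ∩ Bfᶜ).ncard := by
    have hbij : Set.BijOn g (Ag ∩ g ⁻¹' Bfᶜ) (Bg ∩ Bfᶜ) := by
      refine ⟨fun x hx => ⟨hg.mapsTo hx.1, hx.2⟩, hg.injOn.mono inter_subset_left, ?_⟩
      rintro y ⟨hy1, hy2⟩
      obtain ⟨x, hx, rfl⟩ := hg.surjOn hy1
      exact ⟨x, ⟨hx, hy2⟩, rfl⟩
    rw [← hbij.image_eq, Set.ncard_image_of_injOn hbij.injOn]
  have hcard2 : (F '' (Bf ∩ Bgᶜ)).ncard = (Bf ∩ Bgᶜ).ncard :=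
    Set.ncard_image_of_injOn (hFbij.injOn.mono inter_subset_left)
  have hnA : Aᶜ.ncard = Agᶜ.ncard + (Bg ∩ Bfᶜ).ncard := by
    rw [hAc, Set.ncard_union_eq hd1 hAg hfin1, hcard1]
  have hnB : Bᶜ.ncard = Afᶜ.ncard + (Bf ∩ Bgᶜ).ncard := by
    rw [hBc, Set.ncard_union_eq hd2 hAf hfin2, hcard2]
  -- split Bfᶜ and Bgᶜ
  have hsplit1 : Bfᶜ.ncard = (Bg ∩ Bfᶜ).ncard + (Bgᶜ ∩ Bfᶜ).ncard := by
    have hu : Bfᶜ = (Bg ∩ Bfᶜ) ∪ (Bgᶜ ∩ Bfᶜ) := by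
      ext x; by_cases hx : x ∈ Bg <;> simp [hx]
    conv_lhs => rw [hu]
    exact Set.ncard_union_eq (Set.disjoint_left.2 fun x hx hx2 => hx2.1 hx.1)
      (hBf.subset inter_subset_right) (hBf.subset inter_subset_right)
  have hsplit2 : Bgᶜ.ncard = (Bf ∩ Bgᶜ).ncard + (Bfᶜ ∩ Bgᶜ).ncard := by
    have hu : Bgᶜ = (Bf ∩ Bgᶜ) ∪ (Bfᶜ ∩ Bgᶜ) := by
      ext x; by_cases hx : x ∈ Bf <;> simp [hx]
    conv_lhs => rw [hu]
    exact Set.ncard_union_eq (Set.disjoint_left.2 fun x hx hx2 => hx2.1 hx.1)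
      (hBg.subset inter_subset_right) (hBg.subset inter_subset_right)
  have hinter : (Bgᶜ ∩ Bfᶜ).ncard = (Bfᶜ ∩ Bgᶜ).ncard := by rw [inter_comm]
  have hcardeq : Aᶜ.ncard = Bᶜ.ncard := by
    rw [hnA, hnB]; omega
  -- build the equivalence between complements
  haveI : Fintype ↥(Aᶜ) := hAcfin.fintype
  haveI : Fintype ↥(Bᶜ) := hBcfin.fintype
  have hcardeq' : Fintype.card ↥(Aᶜ) = Fintype.card ↥(Bᶜ) := by
    rw [← Nat.card_eq_fintype_card, ← Nat.card_eq_fintype_card,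
      Nat.card_coe_set_eq, Nat.card_coe_set_eq, hcardeq]
  let eC : ↥(Aᶜ) ≃ ↥(Bᶜ) := Fintype.equivOfCardEq hcardeq'
  let eAB : ↥A ≃ ↥B := hAB.equiv _
  let ρ : Ω ≃ Ω :=
    (Equiv.Set.sumCompl A).symm.trans ((eAB.sumCongr eC).trans (Equiv.Set.sumCompl B))
  have hρ : ∀ x (hx : x ∈ A), ρ x = F (g x) := by
    intro x hx
    show (Equiv.Set.sumCompl B) ((eAB.sumCongr eC) ((Equiv.Set.sumCompl A).symm x)) = F (g x)
    rw [Equiv.Set.sumCompl_symm_apply_of_mem hx]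
    rfl
  refine ⟨ρ, A, ?_, hAcfin, ?_⟩
  · intro x hx
    refine ⟨?_, hx.1⟩
    show ρ x ∈ Af
    rw [hρ x hx]
    exact hBsubAf (hAB.mapsTo hx)
  · intro x hx
    rw [hρ x hx]
    exact hFinv.2 hx.2
end

section
/- Let f be a partial-bijection of Ω with domain A_f. Then ind(f) = 0 if and only if there exists a permutation π of Ω such that f and π agree on some cofinite subset of A_f (i.e., f ≡ π, where π is regarded as a partial-bijection with domain Ω). -/
/-- A partial-bijection has index zero iff it is almost equal to a permutation of Ω. -/
theorem stmt_14 {Ω : Type*} [Infinite Ω] (f : Ω → Ω) (Af Bf : Set Ω)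
    (hAf : Afᶜ.Finite) (hBf : Bfᶜ.Finite) (hf : Set.BijOn f Af Bf) :
    (Afᶜ.ncard : ℤ) - (Bfᶜ.ncard : ℤ) = 0 ↔
      ∃ π : Ω ≃ Ω, ∃ E ⊆ Af, Eᶜ.Finite ∧ ∀ x ∈ E, f x = π x := by
  classical
  constructor
  · intro h
    have hcard : Afᶜ.ncard = Bfᶜ.ncard := by omega
    have : Finite ↥Afᶜ := hAf.to_subtype
    have : Finite ↥Bfᶜ := hBf.to_subtype
    have hnat : Nat.card ↥Afᶜ = Nat.card ↥Bfᶜ := by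
      rwa [Nat.card_coe_set_eq, Nat.card_coe_set_eq]
    obtain ⟨e⟩ : Nonempty (↥Afᶜ ≃ ↥Bfᶜ) := Finite.card_eq.mp hnat
    set g : Ω → Ω := fun x => if hx : x ∈ Af then f x else (e ⟨x, hx⟩ : Ω) with hg
    have hgf : Set.EqOn f g Af := fun x hx => by simp [hg, hx]
    have h1 : Set.BijOn g Af Bf := hf.congr hgf
    have h2 : Set.BijOn g Afᶜ Bfᶜ := by
      refine ⟨fun x hx => ?_, fun x hx y hy hxy => ?_, fun y hy => ?_⟩
      · have hx' : x ∉ Af := hx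
        simp only [hg, dif_neg hx']
        exact (e ⟨x, hx⟩).2
      · have hx' : x ∉ Af := hx
        have hy' : y ∉ Af := hy
        simp only [hg, dif_neg hx', dif_neg hy'] at hxy
        have := e.injective (Subtype.ext hxy)
        exact congrArg Subtype.val this
      · refine ⟨(e.symm ⟨y, hy⟩ : Ω), (e.symm ⟨y, hy⟩).2, ?_⟩
        have hx' : (e.symm ⟨y, hy⟩ : Ω) ∉ Af := (e.symm ⟨y, hy⟩).2
        simp [hg, dif_neg hx']
    have hinj : Set.InjOn g (Af ∪ Afᶜ) := by
      intro a ha b hb hab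
      rcases ha with ha | ha <;> rcases hb with hb | hb
      · exact h1.injOn ha hb hab
      · exact absurd (hab ▸ h1.mapsTo ha) (by simpa using h2.mapsTo hb)
      · exact absurd (hab ▸ h2.mapsTo ha) (by simpa using h1.mapsTo hb)
      · exact h2.injOn ha hb hab
    have hbij : Function.Bijective g := by
      rw [← Set.bijOn_univ]
      have := (h1.union h2 hinj)
      simpa [Set.union_compl_self] using this
    refine ⟨Equiv.ofBijective g hbij, Af, le_refl _, hAf, fun x hx => ?_⟩
    simp [Equiv.ofBijective, hg, hx]
  · rintro ⟨π, E, hEAf, hE, hfE⟩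
    have hinjE : Set.InjOn f E := hf.injOn.mono hEAf
    -- f '' E = π '' E
    have himg : f '' E = π '' E := Set.image_congr hfE
    have hπc : (π '' E)ᶜ = π '' Eᶜ := (Set.image_compl_eq π.bijective).symm
    have hπEc_fin : ((f '' E)ᶜ).Finite := by
      rw [himg, hπc]; exact hE.image π
    have hcardπ : Eᶜ.ncard = (f '' E)ᶜ.ncard := by
      rw [himg, hπc, Set.ncard_image_of_injective _ π.injective]
    -- complements decompose
    have hfEBf : f '' E ⊆ Bf := (hf.mapsTo.mono hEAf (le_refl _)).image_subset
    have hEdecomp : Eᶜ = Afᶜ ∪ (Af \ E) := by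
      ext x
      by_cases hx : x ∈ Af
      · simp only [Set.mem_compl_iff, Set.mem_union, Set.mem_diff, hx]
        tauto
      · simp only [Set.mem_compl_iff, Set.mem_union, Set.mem_diff, hx]
        have : x ∉ E := fun h => hx (hEAf h)
        tauto
    have hBdecomp : (f '' E)ᶜ = Bfᶜ ∪ (Bf \ f '' E) := by
      ext x
      by_cases hx : x ∈ Bf
      · simp only [Set.mem_compl_iff, Set.mem_union, Set.mem_diff, hx]
        tauto
      · simp only [Set.mem_compl_iff, Set.mem_union, Set.mem_diff, hx]
        have : x ∉ f '' E := fun h => hx (hfEBf h)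
        tauto
    have hAfE_fin : (Af \ E).Finite := hE.subset (fun x hx => hx.2)
    have hBfE_fin : (Bf \ f '' E).Finite := hπEc_fin.subset (fun x hx => hx.2)
    have hd1 : Disjoint Afᶜ (Af \ E) := by
      rw [Set.disjoint_left]; intro x hx hx2; exact hx hx2.1
    have hd2 : Disjoint Bfᶜ (Bf \ f '' E) := by
      rw [Set.disjoint_left]; intro x hx hx2; exact hx hx2.1
    have hc1 : Eᶜ.ncard = Afᶜ.ncard + (Af \ E).ncard := by
      rw [hEdecomp, Set.ncard_union_eq hd1 hAf hAfE_fin]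
    have hc2 : (f '' E)ᶜ.ncard = Bfᶜ.ncard + (Bf \ f '' E).ncard := by
      rw [hBdecomp, Set.ncard_union_eq hd2 hBf hBfE_fin]
    -- f maps Af \ E bijectively to Bf \ f '' E
    have hdiff : f '' (Af \ E) = Bf \ f '' E := by
      rw [hf.injOn.image_diff_subset hEAf, hf.image_eq]
    have hc3 : (Af \ E).ncard = (Bf \ f '' E).ncard := by
      rw [← hdiff, Set.ncard_image_of_injOn (hf.injOn.mono (fun x hx => hx.1))]
    omega
end
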